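/- Equality-based error-disturbance relation: with N = M_out − A, D = B_out − B self-adjoint on ℂ^d, [M_out,B_out]=0, Ψ a unit vector, {Ψ, Ψ₁⊥,…,Ψ_{d−1}⊥} an orthonormal basis, ε² = ⟨Ψ,N²Ψ⟩, η² = ⟨Ψ,D²Ψ⟩: ε² + η² ≥ ±i⟨Ψ,[A,B]Ψ⟩ ∓ i⟨Ψ,[M_out,B]Ψ⟩ ∓ i⟨Ψ,[A,B_out]Ψ⟩ + Σ_{k=1}^{d−1} |⟨Ψ,(N ± iD)Ψ_k⊥⟩|². -/

import Mathlib

open Complex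

local notation "⟪" x ", " y "⟫" => @inner ℂ _ _ x y

/-- Equality-based error–disturbance relation:
ε² + η² ≥ ±i⟨Ψ,[A,B]Ψ⟩ ∓ i⟨Ψ,[M_out,B]Ψ⟩ ∓ i⟨Ψ,[A,B_out]Ψ⟩
  + Σ_{k≠0} |⟨Ψ,(N ± iD)Ψₖ⊥⟩|². -/
theorem equality_based_error_disturbance
    {d : ℕ} (hd : 0 < d)
    {E : Type*} [NormedAddCommGroup E] [InnerProductSpace ℂ E] [FiniteDimensional ℂ E]
    (A B Mo Bo : E →ₗ[ℂ] E)
    (hA : ∀ x y : E, ⟪A x, y⟫ = ⟪x, A y⟫)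
    (hB : ∀ x y : E, ⟪B x, y⟫ = ⟪x, B y⟫)
    (hMo : ∀ x y : E, ⟪Mo x, y⟫ = ⟪x, Mo y⟫)
    (hBo : ∀ x y : E, ⟪Bo x, y⟫ = ⟪x, Bo y⟫)
    (hcomm : Mo ∘ₗ Bo = Bo ∘ₗ Mo)
    (N D : E →ₗ[ℂ] E) (hN : N = Mo - A) (hD : D = Bo - B)
    (b : OrthonormalBasis (Fin d) ℂ E)
    (Ψ : E) (hΨ : b ⟨0, hd⟩ = Ψ)
    (s : ℝ) (hs : s = 1 ∨ s = -1) :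
    (⟪Ψ, N (N Ψ)⟫).re + (⟪Ψ, D (D Ψ)⟫).re ≥
      s * (Complex.I * ⟪Ψ, A (B Ψ) - B (A Ψ)⟫).re
        - s * (Complex.I * ⟪Ψ, Mo (B Ψ) - B (Mo Ψ)⟫).re
        - s * (Complex.I * ⟪Ψ, A (Bo Ψ) - Bo (A Ψ)⟫).re
        + ∑ k ∈ Finset.univ.filter (fun k : Fin d => k ≠ ⟨0, hd⟩),
            ‖⟪Ψ, N (b k) + ((s : ℂ) * Complex.I) • D (b k)⟫‖ ^ 2 := by
  have hs2 : s * s = 1 := by rcases hs with h | h <;> rw [h] <;> norm_num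
  set c : ℂ := (s : ℂ) * Complex.I with hc
  have hconj : (starRingEnd ℂ) c = -c := by
    simp [hc, Complex.conj_ofReal]
  have hcc : c * c = -1 := by
    rw [hc]; rw [show ((s:ℂ) * Complex.I) * ((s:ℂ) * Complex.I)
      = ((s:ℂ) * (s:ℂ)) * (Complex.I * Complex.I) by ring, Complex.I_mul_I]
    rw [← Complex.ofReal_mul, hs2]; norm_num
  -- self-adjointness of N and D
  have hNs : ∀ x y : E, ⟪N x, y⟫ = ⟪x, N y⟫ := by
    intro x y
    simp [hN, LinearMap.sub_apply, inner_sub_left, inner_sub_right, hMo x y, hA x y]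
  have hDs : ∀ x y : E, ⟪D x, y⟫ = ⟪x, D y⟫ := by
    intro x y
    simp [hD, LinearMap.sub_apply, inner_sub_left, inner_sub_right, hBo x y, hB x y]
  -- the vector v = T* Ψ
  set v : E := N Ψ - c • D Ψ with hv
  -- expansion of ⟪v, v⟫
  have hexp : ⟪v, v⟫ = ⟪N Ψ, N Ψ⟫ + ⟪D Ψ, D Ψ⟫
      - c * (⟪N Ψ, D Ψ⟫ - ⟪D Ψ, N Ψ⟫) := by
    rw [hv]
    rw [inner_sub_left, inner_sub_right, inner_sub_right, inner_smul_left,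
      inner_smul_left, inner_smul_right, inner_smul_right, hconj]
    ring_nf
    rw [sq, hcc]
    ring
  -- commutator identity
  have hMoBo : Mo (Bo Ψ) = Bo (Mo Ψ) := by
    have := congrFun (congrArg (fun f => f.toFun) hcomm) Ψ
    simpa using this
  have hcommC : ⟪N Ψ, D Ψ⟫ - ⟪D Ψ, N Ψ⟫ =
      ⟪Ψ, A (B Ψ) - B (A Ψ)⟫ - ⟪Ψ, Mo (B Ψ) - B (Mo Ψ)⟫ - ⟪Ψ, A (Bo Ψ) - Bo (A Ψ)⟫ := by
    rw [hNs Ψ (D Ψ), hDs Ψ (N Ψ)]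
    simp only [hN, hD, LinearMap.sub_apply, map_sub, inner_sub_right, hMoBo]
    ring
  -- Parseval for v
  have hPars : ⟪v, v⟫ = ∑ k : Fin d, ⟪v, b k⟫ * ⟪b k, v⟫ :=
    (b.sum_inner_mul_inner v v).symm
  -- each term of Parseval is the squared modulus, equal to the target sum terms
  have hterm : ∀ k : Fin d, (⟪v, b k⟫ * ⟪b k, v⟫).re
      = ‖⟪Ψ, N (b k) + ((s : ℂ) * Complex.I) • D (b k)⟫‖ ^ 2 := by
    intro k
    have h1 : ⟪v, b k⟫ = (starRingEnd ℂ) ⟪b k, v⟫ := by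
      rw [← inner_conj_symm]
    have h2 : ⟪b k, v⟫ = (starRingEnd ℂ) ⟪Ψ, N (b k) + ((s : ℂ) * Complex.I) • D (b k)⟫ := by
      rw [hv, inner_sub_right, inner_smul_right, ← hNs, ← hDs, ← inner_conj_symm (N (b k)),
        ← inner_conj_symm (D (b k))]
      rw [inner_add_right, inner_smul_right, map_add, map_mul, hconj]
      ring
    rw [h1, h2, Complex.conj_conj, Complex.mul_conj]
    rw [Complex.ofReal_re, Complex.sq_norm]
  -- put everything together
  have hmain : (⟪Ψ, N (N Ψ)⟫).re + (⟪Ψ, D (D Ψ)⟫).re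
      = s * (Complex.I * ⟪Ψ, A (B Ψ) - B (A Ψ)⟫).re
        - s * (Complex.I * ⟪Ψ, Mo (B Ψ) - B (Mo Ψ)⟫).re
        - s * (Complex.I * ⟪Ψ, A (Bo Ψ) - Bo (A Ψ)⟫).re
        + ∑ k : Fin d,
            ‖⟪Ψ, N (b k) + ((s : ℂ) * Complex.I) • D (b k)⟫‖ ^ 2 := by
    rw [← hNs Ψ (N Ψ), ← hDs Ψ (D Ψ)]
    have h3 : ⟪N Ψ, N Ψ⟫ + ⟪D Ψ, D Ψ⟫ = ⟪v, v⟫ + c * (⟪N Ψ, D Ψ⟫ - ⟪D Ψ, N Ψ⟫) := by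
      rw [hexp]; ring
    have h4 := congrArg Complex.re h3
    rw [Complex.add_re, Complex.add_re] at h4
    rw [h4, hcommC]
    have h5 : (c * (⟪Ψ, A (B Ψ) - B (A Ψ)⟫ - ⟪Ψ, Mo (B Ψ) - B (Mo Ψ)⟫
        - ⟪Ψ, A (Bo Ψ) - Bo (A Ψ)⟫)).re
        = s * (Complex.I * ⟪Ψ, A (B Ψ) - B (A Ψ)⟫).re
          - s * (Complex.I * ⟪Ψ, Mo (B Ψ) - B (Mo Ψ)⟫).re
          - s * (Complex.I * ⟪Ψ, A (Bo Ψ) - Bo (A Ψ)⟫).re := by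
      rw [hc]
      rw [show ((s:ℂ) * Complex.I) * (⟪Ψ, A (B Ψ) - B (A Ψ)⟫ - ⟪Ψ, Mo (B Ψ) - B (Mo Ψ)⟫
          - ⟪Ψ, A (Bo Ψ) - Bo (A Ψ)⟫)
        = (s:ℂ) * (Complex.I * ⟪Ψ, A (B Ψ) - B (A Ψ)⟫)
          - (s:ℂ) * (Complex.I * ⟪Ψ, Mo (B Ψ) - B (Mo Ψ)⟫)
          - (s:ℂ) * (Complex.I * ⟪Ψ, A (Bo Ψ) - Bo (A Ψ)⟫) by ring]
      simp [Complex.sub_re, Complex.re_ofReal_mul]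
    have h6 : (⟪v, v⟫).re
        = ∑ k : Fin d, ‖⟪Ψ, N (b k) + ((s : ℂ) * Complex.I) • D (b k)⟫‖ ^ 2 := by
      rw [hPars, Complex.re_sum]
      exact Finset.sum_congr rfl fun k _ => hterm k
    rw [h5, h6]
    ring
  rw [hmain]
  have hsub : ∑ k ∈ Finset.univ.filter (fun k : Fin d => k ≠ ⟨0, hd⟩),
        ‖⟪Ψ, N (b k) + ((s : ℂ) * Complex.I) • D (b k)⟫‖ ^ 2
      ≤ ∑ k : Fin d,
        ‖⟪Ψ, N (b k) + ((s : ℂ) * Complex.I) • D (b k)⟫‖ ^ 2 :=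
    Finset.sum_le_sum_of_subset_of_nonneg (Finset.filter_subset _ _)
      (fun k _ _ => by positivity)
  linarith
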